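/- Let R > 0 and let V : (0, R] → ℝ be nonnegative, continuous, and locally Lipschitz, with V(r)/r² → π as r → 0⁺, and suppose that for almost every r ∈ (0, R] one has V'(r) + (π/2)·r − 2√π·√(V(r)) ≥ 0. Then V(r) > (π/4)·r² for every r ∈ (0, R]. -/
import Mathlib


open Real MeasureTheory
open Filter Set intervalIntegral Topology NNReal

private lemma seq_slope_tendsto {f : ℝ → ℝ} {x d : ℝ} (hf : HasDerivAt f d x) :
    Tendsto (fun n : ℕ => (f (x + ((n:ℝ)+1)⁻¹) - f x) / ((n:ℝ)+1)⁻¹) atTop (𝓝 d) := by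
  have hu0 : Tendsto (fun n : ℕ => ((n:ℝ)+1)⁻¹) atTop (𝓝 0) :=
    tendsto_one_div_add_atTop_nhds_zero_nat.congr (fun n => by rw [one_div])
  have hupos : ∀ n : ℕ, (0:ℝ) < ((n:ℝ)+1)⁻¹ := fun n => by positivity
  have hslope := hasDerivAt_iff_tendsto_slope.mp hf
  have hseq : Tendsto (fun n : ℕ => x + ((n:ℝ)+1)⁻¹) atTop (𝓝[≠] x) := by
    apply tendsto_nhdsWithin_of_tendsto_nhds_of_eventually_within
    · simpa using tendsto_const_nhds.add hu0
    · exact Eventually.of_forall fun n => by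
        simp only [Set.mem_compl_iff, Set.mem_singleton_iff]
        intro h
        nlinarith [hupos n, h]
  refine (hslope.comp hseq).congr fun n => ?_
  simp [slope_def_field]

private lemma lipschitz_eq_integral_deriv {L : ℝ≥0} {g : ℝ → ℝ} (hg : LipschitzWith L g)
    (a b : ℝ) : g b - g a = ∫ x in a..b, deriv g x := by
  have hc : Continuous g := hg.continuous
  have hint : ∀ c d : ℝ, IntervalIntegrable g volume c d := fun c d => hc.intervalIntegrable c d
  set u : ℕ → ℝ := fun n => ((n:ℝ)+1)⁻¹ with hu_def
  have hupos : ∀ n, 0 < u n := fun n => by positivity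
  -- boundary limits
  have bdry : ∀ c : ℝ, Tendsto (fun n => (∫ x in c..(c + u n), g x) / u n) atTop (𝓝 (g c)) := by
    intro c
    have hG : HasDerivAt (fun t => ∫ x in c..t, g x) (g c) c :=
      integral_hasDerivAt_right (hint c c) (hc.stronglyMeasurableAtFilter _ _) hc.continuousAt
    refine (seq_slope_tendsto hG).congr fun n => ?_
    rw [integral_same]
    ring
  -- identity
  have key : ∀ n, (∫ x in a..b, (g (x + u n) - g x) / u n) =
      ((∫ x in b..(b + u n), g x) - ∫ x in a..(a + u n), g x) / u n := by
    intro n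
    have hint2 : IntervalIntegrable (fun x => g (x + u n)) volume a b :=
      (hc.comp (continuous_id.add continuous_const)).intervalIntegrable a b
    have h1 : (∫ x in a..b, g (x + u n)) = ∫ x in (a + u n)..(b + u n), g x :=
      integral_comp_add_right g (u n)
    have h3 : (∫ x in a..(a + u n), g x) + (∫ x in (a + u n)..(b + u n), g x)
        = ∫ x in a..(b + u n), g x := integral_add_adjacent_intervals (hint _ _) (hint _ _)
    have h4 : (∫ x in a..b, g x) + (∫ x in b..(b + u n), g x)
        = ∫ x in a..(b + u n), g x := integral_add_adjacent_intervals (hint _ _) (hint _ _)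
    have h2 : (∫ x in a..b, (g (x + u n) - g x) / u n)
        = ((∫ x in a..b, g (x + u n)) - ∫ x in a..b, g x) / u n := by
      rw [intervalIntegral.integral_div, integral_sub hint2 (hint a b)]
    rw [h2, h1]
    congr 1
    linarith
  -- DCT
  have hDCT : Tendsto (fun n => ∫ x in a..b, (g (x + u n) - g x) / u n) atTop
      (𝓝 (∫ x in a..b, deriv g x)) := by
    apply intervalIntegral.tendsto_integral_filter_of_dominated_convergence (fun _ => (L:ℝ))
    · exact Eventually.of_forall fun n =>
        (((hc.comp (continuous_id.add continuous_const)).sub hc).div_const _).aestronglyMeasurable.restrict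
    · refine Eventually.of_forall fun n => Eventually.of_forall fun x _ => ?_
      rw [norm_div, Real.norm_of_nonneg (hupos n).le, div_le_iff₀ (hupos n)]
      calc ‖g (x + u n) - g x‖ = dist (g (x + u n)) (g x) := (dist_eq_norm _ _).symm
        _ ≤ L * dist (x + u n) x := hg.dist_le_mul _ _
        _ = L * u n := by rw [Real.dist_eq, add_sub_cancel_left, abs_of_pos (hupos n)]
    · exact intervalIntegrable_const
    · have hae := hg.ae_differentiableAt_real
      filter_upwards [hae] with x hx _
      exact seq_slope_tendsto hx.hasDerivAt
  rw [funext key] at hDCT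
  have lhs_lim : Tendsto (fun n => ((∫ x in b..(b + u n), g x) - ∫ x in a..(a + u n), g x) / u n)
      atTop (𝓝 (g b - g a)) := by
    have := (bdry b).sub (bdry a)
    refine this.congr fun n => ?_
    rw [_root_.sub_div]
  exact tendsto_nhds_unique lhs_lim hDCT

private lemma lipschitz_deriv_bound {L : ℝ≥0} {g : ℝ → ℝ} (hg : LipschitzWith L g) (x : ℝ) :
    |deriv g x| ≤ L := by
  by_cases hx : DifferentiableAt ℝ g x
  · have hslope := hasDerivAt_iff_tendsto_slope.mp hx.hasDerivAt
    have habs : Tendsto (fun y => |slope g x y|) (𝓝[≠] x) (𝓝 |deriv g x|) :=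
      hslope.abs
    refine le_of_tendsto habs ?_
    refine eventually_nhdsWithin_of_forall fun y hy => ?_
    have hyx : y ≠ x := hy
    rw [slope_def_field, abs_div]
    rw [div_le_iff₀ (abs_pos.mpr (sub_ne_zero.mpr hyx))]
    calc |g y - g x| = dist (g y) (g x) := (Real.dist_eq _ _).symm
      _ ≤ L * dist y x := hg.dist_le_mul _ _
      _ = L * |y - x| := by rw [Real.dist_eq]
  · simp [deriv_zero_of_not_differentiableAt hx]

private lemma lipschitz_sub_ge {L : ℝ≥0} {g : ℝ → ℝ} (hg : LipschitzWith L g) {a b c : ℝ}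
    (hab : a ≤ b) (hd : ∀ᵐ x ∂(volume.restrict (Set.Ioo a b)), c ≤ deriv g x) :
    c * (b - a) ≤ g b - g a := by
  rw [lipschitz_eq_integral_deriv hg a b]
  have hmeas : Measurable (deriv g) := measurable_deriv g
  have hintd : IntervalIntegrable (deriv g) volume a b := by
    refine intervalIntegrable_iff.mpr ?_
    refine Measure.integrableOn_of_bounded (M := L) ?_ hmeas.aestronglyMeasurable ?_
    · exact (measure_Ioc_lt_top).ne
    · exact Eventually.of_forall fun x => by
        simpa [Real.norm_eq_abs] using lipschitz_deriv_bound hg x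
  calc c * (b - a) = ∫ _ in a..b, c := by
        rw [intervalIntegral.integral_const, smul_eq_mul, mul_comm]
      _ ≤ ∫ x in a..b, deriv g x := by
        refine integral_mono_ae_restrict hab intervalIntegrable_const hintd ?_
        rw [Measure.restrict_congr_set (Ioo_ae_eq_Icc (μ := volume) (a := a) (b := b))] at hd
        exact hd

private lemma locallyLipschitzOn_compact {f : ℝ → ℝ} {A C : Set ℝ}
    (hf : LocallyLipschitzOn A f) (hC : IsCompact C) (hCA : C ⊆ A) :
    ∃ K : ℝ≥0, LipschitzOnWith K f C := by
  rcases C.eq_empty_or_nonempty with rfl | hne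
  · exact ⟨1, lipschitzOnWith_empty 1 f⟩
  have hloc : ∀ x ∈ C, ∃ ε : ℝ, 0 < ε ∧ ∃ K : ℝ≥0,
      ∀ y ∈ Metric.ball x ε ∩ A, ∀ z ∈ Metric.ball x ε ∩ A,
        dist (f y) (f z) ≤ K * dist y z := by
    intro x hx
    obtain ⟨K, t, ht, hlip⟩ := hf (hCA hx)
    obtain ⟨ε, hε, hball⟩ := Metric.mem_nhdsWithin_iff.mp ht
    exact ⟨ε, hε, K, fun y hy z hz =>
      lipschitzOnWith_iff_dist_le_mul.mp (hlip.mono hball) y hy z hz⟩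
  choose! ε hεpos Kf hKf using hloc
  obtain ⟨t, htcov⟩ := hC.elim_nhds_subcover' (fun x hx => Metric.ball x (ε x / 2))
    (fun x hx => Metric.ball_mem_nhds _ (by linarith [hεpos x hx]))
  obtain ⟨x₀, hx₀⟩ := hne
  have hx₀' := htcov hx₀
  rw [Set.mem_iUnion₂] at hx₀'
  obtain ⟨i₀, hi₀, _⟩ := hx₀'
  have htne : t.Nonempty := ⟨i₀, hi₀⟩
  set δ : ℝ := t.inf' htne (fun i => ε ↑i / 2) with hδ
  have hδpos : 0 < δ := by
    rw [hδ, Finset.lt_inf'_iff]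
    exact fun i _ => by linarith [hεpos ↑i i.2]
  obtain ⟨M, hM⟩ := hC.exists_bound_of_continuousOn ((hf.continuousOn).mono hCA)
  set Kmax : ℝ≥0 := t.sup (fun i => Kf ↑i) with hKmax
  set Kr : ℝ := max (Kmax : ℝ) (2 * max M 0 / δ) with hKr
  have hKr0 : 0 ≤ Kr := le_trans (Kmax.coe_nonneg) (le_max_left _ _)
  refine ⟨Kr.toNNReal, lipschitzOnWith_iff_dist_le_mul.mpr fun x hx y hy => ?_⟩
  have hcoe : ((Kr.toNNReal : ℝ≥0) : ℝ) = Kr := Real.coe_toNNReal _ hKr0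
  rw [hcoe]
  by_cases hd : dist x y < δ
  · -- both in one ball
    have hx' := htcov hx
    rw [Set.mem_iUnion₂] at hx'
    obtain ⟨i, hi, hxi⟩ := hx'
    have hδi : δ ≤ ε ↑i / 2 := Finset.inf'_le _ hi
    have hyi : y ∈ Metric.ball (↑i : ℝ) (ε ↑i) := by
      rw [Metric.mem_ball] at hxi ⊢
      calc dist y (↑i : ℝ) ≤ dist y x + dist x ↑i := dist_triangle _ _ _
        _ < δ + ε ↑i / 2 := by rw [dist_comm y x]; exact add_lt_add hd hxi
        _ ≤ ε ↑i := by linarith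
    have hxi' : x ∈ Metric.ball (↑i : ℝ) (ε ↑i) :=
      Metric.ball_subset_ball (by linarith [hεpos ↑i i.2]) hxi
    have hb := hKf ↑i i.2 x ⟨hxi', hCA hx⟩ y ⟨hyi, hCA hy⟩
    refine hb.trans (mul_le_mul_of_nonneg_right ?_ dist_nonneg)
    have : Kf ↑i ≤ Kmax := by rw [hKmax]; exact Finset.le_sup (f := fun j : {x // x ∈ C} => Kf ↑j) hi
    calc (Kf ↑i : ℝ) ≤ (Kmax : ℝ) := by exact_mod_cast this
      _ ≤ Kr := le_max_left _ _
  · push_neg at hd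
    have h1 : dist (f x) (f y) ≤ 2 * max M 0 := by
      rw [dist_eq_norm]
      calc ‖f x - f y‖ ≤ ‖f x‖ + ‖f y‖ := norm_sub_le _ _
        _ ≤ max M 0 + max M 0 :=
          add_le_add ((hM x hx).trans (le_max_left _ _)) ((hM y hy).trans (le_max_left _ _))
        _ = 2 * max M 0 := by ring
    calc dist (f x) (f y) ≤ 2 * max M 0 := h1
      _ = (2 * max M 0 / δ) * δ := by field_simp
      _ ≤ (2 * max M 0 / δ) * dist x y := by
          refine mul_le_mul_of_nonneg_left hd ?_
          positivity
      _ ≤ Kr * dist x y := mul_le_mul_of_nonneg_right (le_max_right _ _) dist_nonneg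

private lemma sqrt_dist_le {m : ℝ} (hm : 0 < m) : ∀ a b : ℝ, m ≤ a → m ≤ b →
    dist (Real.sqrt a) (Real.sqrt b) ≤ (2 * Real.sqrt m)⁻¹ * dist a b := by
  have key : ∀ a b : ℝ, m ≤ a → m ≤ b → a ≤ b →
      dist (Real.sqrt a) (Real.sqrt b) ≤ (2 * Real.sqrt m)⁻¹ * dist a b := by
    intro a b ha hb hab
    have hsm : 0 < Real.sqrt m := Real.sqrt_pos.mpr hm
    have hsa : Real.sqrt m ≤ Real.sqrt a := Real.sqrt_le_sqrt ha
    have hsb : Real.sqrt m ≤ Real.sqrt b := Real.sqrt_le_sqrt hb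
    have h1 : Real.sqrt a ≤ Real.sqrt b := Real.sqrt_le_sqrt hab
    rw [Real.dist_eq, Real.dist_eq, abs_of_nonpos (by linarith), abs_of_nonpos (by linarith)]
    have hkey : (Real.sqrt b - Real.sqrt a) * (Real.sqrt b + Real.sqrt a) = b - a := by
      have h2 := Real.sq_sqrt (hm.le.trans ha)
      have h3 := Real.sq_sqrt (hm.le.trans hb)
      nlinarith
    rw [inv_mul_eq_div, le_div_iff₀ (by positivity)]
    nlinarith
  intro a b ha hb
  rcases le_total a b with h | h
  · exact key a b ha hb h
  · rw [dist_comm, dist_comm a b]; exact key b a hb ha h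

private lemma sqrt_comp_lipschitz {f : ℝ → ℝ} {s : Set ℝ} {K : ℝ≥0} {m : ℝ} (hm : 0 < m)
    (hf : LipschitzOnWith K f s) (hmap : ∀ x ∈ s, m ≤ f x) :
    ∃ K' : ℝ≥0, LipschitzOnWith K' (fun x => Real.sqrt (f x)) s := by
  refine ⟨(2 * Real.sqrt m)⁻¹.toNNReal * K, lipschitzOnWith_iff_dist_le_mul.mpr fun x hx y hy => ?_⟩
  have hc0 : (0:ℝ) ≤ (2 * Real.sqrt m)⁻¹ := by positivity
  calc dist (Real.sqrt (f x)) (Real.sqrt (f y))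
      ≤ (2 * Real.sqrt m)⁻¹ * dist (f x) (f y) :=
        sqrt_dist_le hm (f x) (f y) (hmap x hx) (hmap y hy)
    _ ≤ (2 * Real.sqrt m)⁻¹ * (K * dist x y) := by
        refine mul_le_mul_of_nonneg_left ?_ hc0
        exact lipschitzOnWith_iff_dist_le_mul.mp hf x hx y hy
    _ = ((2 * Real.sqrt m)⁻¹.toNNReal * K : ℝ≥0) * dist x y := by
        rw [NNReal.coe_mul, Real.coe_toNNReal _ hc0]; ring

set_option maxHeartbeats 1600000

/-- ODE comparison lemma (Topping's argument with Brendle's sharp constant):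
if `V : (0, R] → ℝ` is nonnegative, continuous, locally Lipschitz, `V(r)/r² → π`
as `r → 0⁺`, and `V' + (π/2) r - 2√π √V ≥ 0` a.e., then `V(r) > (π/4) r²` on `(0, R]`. -/
theorem stmt_10 (R : ℝ) (hR : 0 < R) (V : ℝ → ℝ)
    (hV0 : ∀ r ∈ Set.Ioc (0:ℝ) R, 0 ≤ V r)
    (hVcont : ContinuousOn V (Set.Ioc 0 R))
    (hVlip : LocallyLipschitzOn (Set.Ioc 0 R) V)
    (hlim : Filter.Tendsto (fun r : ℝ => V r / r ^ 2)
      (nhdsWithin 0 (Set.Ioi 0)) (nhds π))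
    (hineq : ∀ᵐ r ∂(volume.restrict (Set.Ioc (0:ℝ) R)),
      DifferentiableAt ℝ V r ∧
        0 ≤ deriv V r + (π / 2) * r - 2 * Real.sqrt π * Real.sqrt (V r)) :
    ∀ r ∈ Set.Ioc (0:ℝ) R, (π / 4) * r ^ 2 < V r := by
  intro r hr
  by_contra hcon
  push_neg at hcon
  obtain ⟨hr0, hrR⟩ := hr
  -- near 0, V x > (π/2) x²
  have h2 : ∀ᶠ x in 𝓝[>] (0:ℝ), π/2 < V x / x^2 :=
    hlim.eventually (eventually_gt_nhds (by linarith [Real.pi_pos]))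
  rw [eventually_nhdsWithin_iff] at h2
  obtain ⟨ε, hε, hP⟩ := Metric.eventually_nhds_iff.mp h2
  have P : ∀ x : ℝ, 0 < x → x < ε → π/2 * x^2 < V x := by
    intro x hx1 hx2
    have hd : dist x 0 < ε := by rw [Real.dist_eq, sub_zero, abs_of_pos hx1]; exact hx2
    have := hP hd hx1
    have hx2' : (0:ℝ) < x^2 := by positivity
    have h3 : π/2 * x^2 < V x := by
      have h4 := (lt_div_iff₀ hx2').mp this
      linarith
    exact h3
  set δ := min (ε/2) r with hδdef
  have hδpos : 0 < δ := lt_min (by linarith) hr0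
  have hδr : δ ≤ r := min_le_right _ _
  have hδε : δ < ε := lt_of_le_of_lt (min_le_left _ _) (by linarith)
  set T := {t : ℝ | t ∈ Set.Icc δ R ∧ V t ≤ π/4 * t^2} with hT
  have hrT : r ∈ T := ⟨⟨hδr, hrR⟩, by linarith [hcon]⟩
  have hIccsub : Set.Icc δ R ⊆ Set.Ioc 0 R := fun t ht => ⟨lt_of_lt_of_le hδpos ht.1, ht.2⟩
  have hTclosed : IsClosed T := by
    have hWc : ContinuousOn (fun t => V t - π/4 * t^2) (Set.Icc δ R) :=
      (hVcont.mono hIccsub).sub (Continuous.continuousOn (by continuity))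
    have hTeq : T = Set.Icc δ R ∩ (fun t => V t - π/4 * t^2) ⁻¹' Set.Iic 0 := by
      ext t
      simp only [hT, Set.mem_setOf_eq, Set.mem_inter_iff, Set.mem_preimage, Set.mem_Iic]
      constructor
      · rintro ⟨h1, h3⟩; exact ⟨h1, by linarith⟩
      · rintro ⟨h1, h3⟩; exact ⟨h1, by linarith⟩
    rw [hTeq]
    exact hWc.preimage_isClosed_of_isClosed isClosed_Icc isClosed_Iic
  have hTbdd : BddBelow T := ⟨δ, fun t ht => ht.1.1⟩
  set r₀ := sInf T with hr₀def
  have hr₀T : r₀ ∈ T := hTclosed.csInf_mem ⟨r, hrT⟩ hTbdd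
  have hδr₀ : δ ≤ r₀ := hr₀T.1.1
  have hr₀R : r₀ ≤ R := hr₀T.1.2
  have hr₀pos : 0 < r₀ := lt_of_lt_of_le hδpos hδr₀
  have hVr₀ : V r₀ ≤ π/4 * r₀^2 := hr₀T.2
  have hbelow : ∀ t, 0 < t → t < r₀ → π/4 * t^2 < V t := by
    intro t ht0 htr
    by_cases hcase : t < δ
    · have := P t ht0 (lt_trans hcase hδε)
      nlinarith [Real.pi_pos, sq_nonneg t]
    · push_neg at hcase
      by_contra hc; push_neg at hc
      have htT : t ∈ T := ⟨⟨hcase, le_trans htr.le hr₀R⟩, hc⟩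
      have := csInf_le hTbdd htT
      rw [← hr₀def] at this
      linarith
  set s := δ/2 with hsdef
  have hs0 : 0 < s := by rw [hsdef]; linarith
  have hsδ : s < δ := by rw [hsdef]; linarith
  have hsr₀ : s < r₀ := lt_of_lt_of_le hsδ hδr₀
  have hVs : π/2 * s^2 < V s := P s hs0 (lt_trans hsδ hδε)
  -- V r₀ ≥ π/4 r₀² by continuity from the left
  have hVr₀ge : π/4 * r₀^2 ≤ V r₀ := by
    have hmem : Set.Ico s r₀ ∈ 𝓝[<] r₀ := Ico_mem_nhdsLT_of_mem ⟨hsr₀, le_refl r₀⟩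
    have hfe : 𝓝[Set.Ico s r₀ ∩ Set.Iio r₀] r₀ = 𝓝[<] r₀ := nhdsWithin_inter_of_mem hmem
    have hII : Set.Ico s r₀ ∩ Set.Iio r₀ = Set.Ico s r₀ :=
      Set.inter_eq_left.mpr (fun t ht => ht.2)
    rw [hII] at hfe
    haveI : (𝓝[Set.Ico s r₀] r₀).NeBot := by rw [hfe]; infer_instance
    have hIcosub : Set.Ico s r₀ ⊆ Set.Ioc 0 R :=
      fun t ht => ⟨lt_of_lt_of_le hs0 ht.1, le_trans ht.2.le hr₀R⟩
    have htend : Filter.Tendsto V (𝓝[Set.Ico s r₀] r₀) (𝓝 (V r₀)) :=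
      (hVcont r₀ ⟨hr₀pos, hr₀R⟩).mono_left
        (le_trans (nhdsWithin_mono _ hIcosub) le_rfl)
    have htend2 : Filter.Tendsto (fun t => π/4 * t^2) (𝓝[Set.Ico s r₀] r₀) (𝓝 (π/4 * r₀^2)) :=
      ((continuous_const.mul (continuous_pow 2)).tendsto r₀).mono_left nhdsWithin_le_nhds
    refine le_of_tendsto_of_tendsto htend2 htend ?_
    filter_upwards [eventually_mem_nhdsWithin] with t ht
    exact (hbelow t (lt_of_lt_of_le hs0 ht.1) ht.2).le
  set m₀ := π/4 * s^2 with hm₀def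
  have hm₀pos : 0 < m₀ := by rw [hm₀def]; positivity
  have hmap : ∀ t ∈ Set.Icc s r₀, m₀ ≤ V t := by
    rintro t ⟨hts, htr⟩
    rcases eq_or_lt_of_le htr with heq | hlt
    · rw [heq] at hts ⊢
      have hsq : s^2 ≤ r₀^2 := by nlinarith [hs0]
      have h12 := mul_le_mul_of_nonneg_left hsq (by positivity : (0:ℝ) ≤ π/4)
      rw [hm₀def]; linarith
    · have h13 := hbelow t (lt_of_lt_of_le hs0 hts) hlt
      have hsq : s^2 ≤ t^2 := by nlinarith [hs0]
      have h12 := mul_le_mul_of_nonneg_left hsq (by positivity : (0:ℝ) ≤ π/4)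
      rw [hm₀def]; linarith
  have hIccsub2 : Set.Icc s r₀ ⊆ Set.Ioc 0 R :=
    fun t ht => ⟨lt_of_lt_of_le hs0 ht.1, le_trans ht.2 hr₀R⟩
  obtain ⟨K₁, hK₁⟩ := locallyLipschitzOn_compact hVlip isCompact_Icc hIccsub2
  obtain ⟨K₂, hK₂⟩ := sqrt_comp_lipschitz hm₀pos hK₁ hmap
  obtain ⟨G, hGlip, hGeq⟩ := hK₂.extend_real
  -- a.e. derivative bound for G on (s, r₀)
  have hae : ∀ᵐ x ∂(volume.restrict (Set.Ioo s r₀)), Real.sqrt π / 2 ≤ deriv G x := by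
    have hsub : Set.Ioo s r₀ ⊆ Set.Ioc 0 R :=
      fun t ht => ⟨lt_trans hs0 ht.1, le_trans ht.2.le hr₀R⟩
    have h1 := ae_restrict_of_ae_restrict_of_subset hsub hineq
    have h2 : ∀ᵐ x ∂(volume.restrict (Set.Ioo s r₀)), x ∈ Set.Ioo s r₀ :=
      ae_restrict_mem measurableSet_Ioo
    filter_upwards [h1, h2] with x hx hmem
    obtain ⟨hdiff, hineqx⟩ := hx
    have hx0 : 0 < x := lt_trans hs0 hmem.1
    have hVx : π/4 * x^2 < V x := hbelow x hx0 hmem.2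
    have hVxpos : 0 < V x := lt_of_le_of_lt (by positivity) hVx
    have hπpos := Real.pi_pos
    have h5 : Real.sqrt π / 2 * x < Real.sqrt (V x) := by
      rw [show Real.sqrt (V x) = Real.sqrt (V x) from rfl]
      have h6 : (Real.sqrt π / 2 * x)^2 < V x := by
        have := Real.sq_sqrt hπpos.le
        nlinarith
      have h7 : 0 ≤ Real.sqrt π / 2 * x := by positivity
      nlinarith [Real.sq_sqrt hVxpos.le, Real.sqrt_nonneg (V x)]
    have hgd : HasDerivAt (fun t => Real.sqrt (V t)) (deriv V x / (2 * Real.sqrt (V x))) x :=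
      hdiff.hasDerivAt.sqrt (ne_of_gt hVxpos)
    have hGx : deriv G x = deriv V x / (2 * Real.sqrt (V x)) := by
      have hnb : Set.Icc s r₀ ∈ 𝓝 x := Icc_mem_nhds hmem.1 hmem.2
      have heq : G =ᶠ[𝓝 x] (fun t => Real.sqrt (V t)) :=
        Filter.eventuallyEq_of_mem hnb (fun t ht => (hGeq ht).symm)
      rw [heq.deriv_eq]; exact hgd.deriv
    rw [hGx, le_div_iff₀ (by positivity)]
    have hsq : 0 < Real.sqrt (V x) := Real.sqrt_pos.mpr hVxpos
    have hmul := mul_lt_mul_of_pos_left h5 (Real.sqrt_pos.mpr hπpos)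
    nlinarith [Real.sq_sqrt hπpos.le]
  have hmain := lipschitz_sub_ge hGlip hsr₀.le hae
  have hGr₀ : G r₀ = Real.sqrt (V r₀) := (hGeq ⟨hsr₀.le, le_refl r₀⟩).symm
  have hGs : G s = Real.sqrt (V s) := (hGeq ⟨le_refl s, hsr₀.le⟩).symm
  have hπpos := Real.pi_pos
  have hb1 : Real.sqrt (V r₀) ≤ Real.sqrt π / 2 * r₀ := by
    have h8 : π/4 * r₀^2 = (Real.sqrt π / 2 * r₀)^2 := by
      have := Real.sq_sqrt hπpos.le; nlinarith
    calc Real.sqrt (V r₀) ≤ Real.sqrt (π/4 * r₀^2) := Real.sqrt_le_sqrt hVr₀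
      _ = Real.sqrt π / 2 * r₀ := by rw [h8, Real.sqrt_sq (by positivity)]
  have hb2 : Real.sqrt (π/2) * s ≤ Real.sqrt (V s) := by
    have h9 : π/2 * s^2 = (Real.sqrt (π/2) * s)^2 := by
      have := Real.sq_sqrt (by linarith : (0:ℝ) ≤ π/2); nlinarith
    calc Real.sqrt (π/2) * s = Real.sqrt (π/2 * s^2) := by
          rw [h9, Real.sqrt_sq (by positivity)]
      _ ≤ Real.sqrt (V s) := Real.sqrt_le_sqrt hVs.le
  have hb3 : Real.sqrt π / 2 < Real.sqrt (π/2) := by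
    have h10 : Real.sqrt (π/4) < Real.sqrt (π/2) :=
      Real.sqrt_lt_sqrt (by positivity) (by linarith)
    have h11 : Real.sqrt (π/4) = Real.sqrt π / 2 := by
      have := Real.sq_sqrt hπpos.le
      rw [show π/4 = (Real.sqrt π / 2)^2 by nlinarith, Real.sqrt_sq (by positivity)]
    linarith
  have hfinal := mul_lt_mul_of_pos_right hb3 hs0
  rw [hGr₀, hGs] at hmain
  have hexp : Real.sqrt π/2*(r₀-s) = Real.sqrt π/2*r₀ - Real.sqrt π/2*s := by ring
  linarith [hmain, hb1, hb2, hfinal, hexp]
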